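/- Let H be a Hopf algebra over a field k with antipode S. Let U be a k-vector space equipped with linear maps λ: U → H ⊗ U and ρ: U → U ⊗ H such that (U, λ) is a left H-comodule, (U, ρ) is a right H-comodule, and (1 ⊗ ρ) ∘ λ = (λ ⊗ 1) ∘ ρ (i.e. U is an H-bicomodule). Call u ∈ U stable if T(λ(u)) = ρ(u), where T: H ⊗ U → U ⊗ H is the twist x ⊗ y ↦ y ⊗ x. Define the adjoint coaction κ: U → U ⊗ H by κ(u) = Σ_i u_i ⊗ f_i'' S(f_i'), where (1 ⊗ ρ)λ(u) = Σ_i f_i' ⊗ u_i ⊗ f_i''. Then every stable element u satisfies κ(u) = u ⊗ 1; and if the antipode S is injective, then conversely every u with κ(u) = u ⊗ 1 is stable. -/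
import Mathlib


open TensorProduct

namespace Paper

variable (k H U : Type) [Field k] [Ring H] [HopfAlgebra k H]
  [AddCommGroup U] [Module k U]

/-- The adjoint coaction `κ : U → U ⊗ H`, `κ(u) = Σ u_i ⊗ f_i'' S(f_i')` where
`(1 ⊗ ρ)(λ(u)) = Σ f_i' ⊗ u_i ⊗ f_i''`. -/
noncomputable def adjointCoaction (lam : U →ₗ[k] H ⊗[k] U) (rho : U →ₗ[k] U ⊗[k] H) :
    U →ₗ[k] U ⊗[k] H :=
  (TensorProduct.map LinearMap.id
      ((LinearMap.mul' k H) ∘ₗ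
        (TensorProduct.map LinearMap.id (HopfAlgebra.antipode (R := k))))) ∘ₗ
    (TensorProduct.assoc k U H H).toLinearMap ∘ₗ
    (TensorProduct.comm k H (U ⊗[k] H)).toLinearMap ∘ₗ
    (TensorProduct.map LinearMap.id rho) ∘ₗ lam

end Paper

namespace Statement13Aux

open TensorProduct Coalgebra HopfAlgebra

variable (k : Type) [Field k]

section Generic

variable {A B C D : Type} [AddCommGroup A] [Module k A] [AddCommGroup B] [Module k B]
  [AddCommGroup C] [Module k C] [AddCommGroup D] [Module k D]

lemma map_map_fst (f : A →ₗ[k] B) (g : B →ₗ[k] C) (z : A ⊗[k] D) :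
    TensorProduct.map g LinearMap.id (TensorProduct.map f LinearMap.id z) =
      TensorProduct.map (g ∘ₗ f) LinearMap.id z := by
  rw [← LinearMap.comp_apply, ← TensorProduct.map_comp, LinearMap.id_comp]

lemma map_map_snd (f : A →ₗ[k] B) (g : B →ₗ[k] C) (z : D ⊗[k] A) :
    TensorProduct.map LinearMap.id g (TensorProduct.map LinearMap.id f z) =
      TensorProduct.map LinearMap.id (g ∘ₗ f) z := by
  rw [← LinearMap.comp_apply, ← TensorProduct.map_comp, LinearMap.id_comp]

lemma map_swap (f : A →ₗ[k] B) (g : C →ₗ[k] D) (z : A ⊗[k] C) :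
    TensorProduct.map f LinearMap.id (TensorProduct.map LinearMap.id g z) =
      TensorProduct.map LinearMap.id g (TensorProduct.map f LinearMap.id z) := by
  rw [← LinearMap.comp_apply, ← LinearMap.comp_apply, ← TensorProduct.map_comp,
    ← TensorProduct.map_comp, LinearMap.id_comp, LinearMap.id_comp, LinearMap.comp_id,
    LinearMap.comp_id]

end Generic

variable (H U : Type) [Ring H] [HopfAlgebra k H] [AddCommGroup U] [Module k U]

/-- `m ∘ (1 ⊗ S)` -/
noncomputable def mS : H ⊗[k] H →ₗ[k] H :=
  LinearMap.mul' k H ∘ₗ TensorProduct.map LinearMap.id (HopfAlgebra.antipode (R := k))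

/-- `(x ⊗ v) ⊗ a ↦ v ⊗ (a ⊗ x)` -/
noncomputable def R1 : (H ⊗[k] U) ⊗[k] H →ₗ[k] U ⊗[k] (H ⊗[k] H) :=
  (TensorProduct.assoc k U H H).toLinearMap ∘ₗ
    (TensorProduct.comm k H (U ⊗[k] H)).toLinearMap ∘ₗ
    (TensorProduct.assoc k H U H).toLinearMap

@[simp] lemma R1_tmul (x : H) (v : U) (a : H) :
    R1 k H U ((x ⊗ₜ v) ⊗ₜ a) = v ⊗ₜ (a ⊗ₜ x) := by
  simp [R1]

/-- `(x ⊗ z) ⊗ a ↦ z ⊗ (a ⊗ x)` for `z : H ⊗ U` -/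
noncomputable def R1' : (H ⊗[k] (H ⊗[k] U)) ⊗[k] H →ₗ[k] (H ⊗[k] U) ⊗[k] (H ⊗[k] H) :=
  (TensorProduct.assoc k (H ⊗[k] U) H H).toLinearMap ∘ₗ
    (TensorProduct.comm k H ((H ⊗[k] U) ⊗[k] H)).toLinearMap ∘ₗ
    (TensorProduct.assoc k H (H ⊗[k] U) H).toLinearMap

@[simp] lemma R1'_tmul (x : H) (z : H ⊗[k] U) (a : H) :
    R1' k H U ((x ⊗ₜ z) ⊗ₜ a) = z ⊗ₜ (a ⊗ₜ x) := by
  simp [R1']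

/-- `v ⊗ (x ⊗ a) ↦ v ⊗ (a * x)` -/
noncomputable def M' : U ⊗[k] (H ⊗[k] H) →ₗ[k] U ⊗[k] H :=
  TensorProduct.map LinearMap.id
    (LinearMap.mul' k H ∘ₗ (TensorProduct.comm k H H).toLinearMap)

@[simp] lemma M'_tmul (v : U) (x a : H) :
    M' k H U (v ⊗ₜ (x ⊗ₜ a)) = v ⊗ₜ (a * x) := by
  simp [M']

/-- `(x ⊗ v) ⊗ a ↦ v ⊗ (x ⊗ a)` -/
noncomputable def R2 : (H ⊗[k] U) ⊗[k] H →ₗ[k] U ⊗[k] (H ⊗[k] H) :=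
  (TensorProduct.assoc k U H H).toLinearMap ∘ₗ
    TensorProduct.map (TensorProduct.comm k H U).toLinearMap LinearMap.id

@[simp] lemma R2_tmul (x : H) (v : U) (a : H) :
    R2 k H U ((x ⊗ₜ v) ⊗ₜ a) = v ⊗ₜ (x ⊗ₜ a) := by
  simp [R2]

/-- `(p ⊗ v) ⊗ a ↦ v ⊗ (a ⊗ p)` for `p : H ⊗ H` -/
noncomputable def Rfin : ((H ⊗[k] H) ⊗[k] U) ⊗[k] H →ₗ[k] U ⊗[k] (H ⊗[k] (H ⊗[k] H)) :=
  (TensorProduct.assoc k U H (H ⊗[k] H)).toLinearMap ∘ₗ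
    (TensorProduct.comm k (H ⊗[k] H) (U ⊗[k] H)).toLinearMap ∘ₗ
    (TensorProduct.assoc k (H ⊗[k] H) U H).toLinearMap

@[simp] lemma Rfin_tmul (p : H ⊗[k] H) (v : U) (a : H) :
    Rfin k H U ((p ⊗ₜ v) ⊗ₜ a) = v ⊗ₜ (a ⊗ₜ p) := by
  simp [Rfin]

variable (lam : U →ₗ[k] H ⊗[k] U)

lemma L1 :
    (TensorProduct.map lam (LinearMap.id : H ⊗[k] H →ₗ[k] H ⊗[k] H)) ∘ₗ R1 k H U =
      R1' k H U ∘ₗ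
        TensorProduct.map (TensorProduct.map LinearMap.id lam) LinearMap.id := by
  apply TensorProduct.ext'
  intro z a
  induction z using TensorProduct.induction_on with
  | zero => simp
  | add z₁ z₂ ih₁ ih₂ => simp only [add_tmul, map_add, ih₁, ih₂]
  | tmul x v => simp

lemma L2 :
    M' k H U ∘ₗ R2 k H U ∘ₗ
        TensorProduct.map LinearMap.id (mS k H) ∘ₗ R1' k H U ∘ₗ
        TensorProduct.map (TensorProduct.assoc k H H U).toLinearMap LinearMap.id =
      (TensorProduct.map LinearMap.id (LinearMap.mul' k H)) ∘ₗ
        (TensorProduct.map LinearMap.id (TensorProduct.map LinearMap.id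
          (LinearMap.mul' k H ∘ₗ
            TensorProduct.map (HopfAlgebra.antipode (R := k)) LinearMap.id))) ∘ₗ
        Rfin k H U := by
  apply TensorProduct.ext'
  intro z a
  induction z using TensorProduct.induction_on with
  | zero => simp
  | add z₁ z₂ ih₁ ih₂ => simp only [add_tmul, map_add, ih₁, ih₂]
  | tmul p v =>
    induction p using TensorProduct.induction_on with
    | zero => simp
    | add p₁ p₂ ih₁ ih₂ =>
      simp only [add_tmul, map_add, ih₁, ih₂]
    | tmul x y => simp [mS, mul_assoc]

lemma L3 :
    Rfin k H U ∘ₗ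
        TensorProduct.map (TensorProduct.map (Coalgebra.comul (R := k)) LinearMap.id)
          LinearMap.id =
      TensorProduct.map LinearMap.id
          (TensorProduct.map LinearMap.id (Coalgebra.comul (R := k))) ∘ₗ R1 k H U := by
  apply TensorProduct.ext'
  intro z a
  induction z using TensorProduct.induction_on with
  | zero => simp
  | add z₁ z₂ ih₁ ih₂ => simp only [add_tmul, map_add, ih₁, ih₂]
  | tmul x v => simp

lemma L4 :
    (TensorProduct.map LinearMap.id (LinearMap.mul' k H)) ∘ₗ
        (TensorProduct.map LinearMap.id (TensorProduct.map LinearMap.id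
          ((Algebra.linearMap k H) ∘ₗ (Coalgebra.counit (R := k))))) ∘ₗ R1 k H U =
      TensorProduct.map ((TensorProduct.lid k U).toLinearMap ∘ₗ
        TensorProduct.map (Coalgebra.counit (R := k)) LinearMap.id) LinearMap.id := by
  apply TensorProduct.ext'
  intro z a
  induction z using TensorProduct.induction_on with
  | zero => simp
  | add z₁ z₂ ih₁ ih₂ => simp only [add_tmul, map_add, ih₁, ih₂]
  | tmul x v =>
    simp [Algebra.smul_def, Algebra.commutes, smul_tmul]

lemma phiOne (w : H ⊗[k] U) :
    M' k H U (R2 k H U (w ⊗ₜ (1 : H))) = TensorProduct.comm k H U w := by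
  induction w using TensorProduct.induction_on with
  | zero => simp
  | add w₁ w₂ ih₁ ih₂ => simp only [add_tmul, map_add, ih₁, ih₂]
  | tmul x v => simp

lemma stable_rearrange (rho : U →ₗ[k] U ⊗[k] H) (z : U ⊗[k] H) :
    (TensorProduct.comm k H (U ⊗[k] H))
        ((TensorProduct.map LinearMap.id rho) ((TensorProduct.comm k H U).symm z)) =
      (TensorProduct.map rho LinearMap.id) z := by
  induction z using TensorProduct.induction_on with
  | zero => simp
  | add z₁ z₂ ih₁ ih₂ => simp only [map_add, ih₁, ih₂]
  | tmul v a => simp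

lemma antipode_lTensor :
    (LinearMap.mul' k H ∘ₗ
        TensorProduct.map LinearMap.id (HopfAlgebra.antipode (R := k))) ∘ₗ
      (Coalgebra.comul (R := k)) = Algebra.linearMap k H ∘ₗ Coalgebra.counit := by
  rw [LinearMap.comp_assoc]
  exact HopfAlgebra.mul_antipode_lTensor_comul

lemma antipode_rTensor :
    (LinearMap.mul' k H ∘ₗ
        TensorProduct.map (HopfAlgebra.antipode (R := k)) LinearMap.id) ∘ₗ
      (Coalgebra.comul (R := k)) = Algebra.linearMap k H ∘ₗ Coalgebra.counit := by
  rw [LinearMap.comp_assoc]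
  exact HopfAlgebra.mul_antipode_rTensor_comul

end Statement13Aux

open Paper in
/-- Lemma 6.1(i), in Hopf-algebraic form: let `U` be an `H`-bicomodule, with structure maps
`λ : U → H ⊗ U` and `ρ : U → U ⊗ H`.  Every stable element `u` (i.e. `T(λ(u)) = ρ(u)`)
satisfies `κ(u) = u ⊗ 1` for the adjoint coaction `κ`; and if the antipode is injective,
conversely every `u` with `κ(u) = u ⊗ 1` is stable. -/
theorem statement13 (k H U : Type) [Field k] [Ring H] [HopfAlgebra k H]
    [AddCommGroup U] [Module k U]
    (lam : U →ₗ[k] H ⊗[k] U) (rho : U →ₗ[k] U ⊗[k] H)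
    -- `(U, λ)` is a left `H`-comodule:
    (hl1 : (TensorProduct.assoc k H H U).toLinearMap ∘ₗ
        (TensorProduct.map Coalgebra.comul LinearMap.id) ∘ₗ lam =
        (TensorProduct.map LinearMap.id lam) ∘ₗ lam)
    (hl2 : ∀ u : U,
      (TensorProduct.lid k U) ((TensorProduct.map Coalgebra.counit LinearMap.id) (lam u)) = u)
    -- `(U, ρ)` is a right `H`-comodule:
    (hr1 : (TensorProduct.assoc k U H H).toLinearMap ∘ₗ
        (TensorProduct.map rho LinearMap.id) ∘ₗ rho =
        (TensorProduct.map LinearMap.id Coalgebra.comul) ∘ₗ rho)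
    (hr2 : ∀ u : U,
      (TensorProduct.rid k U) ((TensorProduct.map LinearMap.id Coalgebra.counit) (rho u)) = u)
    -- the bicomodule compatibility `(1 ⊗ ρ) ∘ λ = (λ ⊗ 1) ∘ ρ`:
    (hcompat : (TensorProduct.map LinearMap.id rho) ∘ₗ lam =
        (TensorProduct.assoc k H U H).toLinearMap ∘ₗ
          (TensorProduct.map lam LinearMap.id) ∘ₗ rho) :
    (∀ u : U, (TensorProduct.comm k H U) (lam u) = rho u →
        adjointCoaction k H U lam rho u = u ⊗ₜ[k] 1) ∧
      (Function.Injective (HopfAlgebra.antipode (R := k) (A := H)) →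
        ∀ u : U, adjointCoaction k H U lam rho u = u ⊗ₜ[k] 1 →
          (TensorProduct.comm k H U) (lam u) = rho u) := by
  open Statement13Aux in
  constructor
  · -- part (i)
    intro u hst
    have hlu : lam u = (TensorProduct.comm k H U).symm (rho u) := by
      rw [← hst]; simp
    have hcounit : (TensorProduct.map LinearMap.id (Coalgebra.counit (R := k))) (rho u) =
        u ⊗ₜ (1 : k) := by
      have h := congrArg (TensorProduct.rid k U).symm (hr2 u)
      rw [LinearEquiv.symm_apply_apply] at h
      rw [h, TensorProduct.rid_symm_apply]
    have step1 : adjointCoaction k H U lam rho u =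
        (TensorProduct.map LinearMap.id
          ((LinearMap.mul' k H) ∘ₗ
            (TensorProduct.map LinearMap.id (HopfAlgebra.antipode (R := k)))))
          ((TensorProduct.map LinearMap.id Coalgebra.comul) (rho u)) := by
      simp only [adjointCoaction, LinearMap.comp_apply, LinearEquiv.coe_coe]
      rw [hlu, Statement13Aux.stable_rearrange]
      have h1 := LinearMap.congr_fun hr1 u
      simp only [LinearMap.comp_apply, LinearEquiv.coe_coe] at h1
      rw [h1]
    rw [step1, Statement13Aux.map_map_snd, Statement13Aux.antipode_lTensor,
      ← Statement13Aux.map_map_snd, hcounit]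
    simp
  · -- part (ii)
    intro _ u h
    have hl2' : (TensorProduct.lid k U).toLinearMap ∘ₗ
        (TensorProduct.map (Coalgebra.counit (R := k)) LinearMap.id) ∘ₗ lam =
        LinearMap.id := by
      apply LinearMap.ext; intro v
      simpa using hl2 v
    have hc := LinearMap.congr_fun hcompat u
    simp only [LinearMap.comp_apply, LinearEquiv.coe_coe] at hc
    have hk : adjointCoaction k H U lam rho u =
        (TensorProduct.map LinearMap.id (mS k H))
          (R1 k H U ((TensorProduct.map lam LinearMap.id) (rho u))) := by
      simp only [adjointCoaction, mS, R1, LinearMap.comp_apply, LinearEquiv.coe_coe]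
      rw [hc]
    have hrhs : M' k H U (R2 k H U ((TensorProduct.map lam (LinearMap.id : H →ₗ[k] H))
        (u ⊗ₜ (1 : H)))) = TensorProduct.comm k H U (lam u) := by
      have ht : (TensorProduct.map lam (LinearMap.id : H →ₗ[k] H)) (u ⊗ₜ (1 : H)) =
          lam u ⊗ₜ (1 : H) := by simp
      rw [ht, Statement13Aux.phiOne]
    have hlhs : M' k H U (R2 k H U ((TensorProduct.map lam (LinearMap.id : H →ₗ[k] H))
        (adjointCoaction k H U lam rho u))) = rho u := by
      rw [hk]
      set s : (H ⊗[k] U) ⊗[k] H := (TensorProduct.map lam LinearMap.id) (rho u) with hs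
      -- commute `lam` past `mS`
      rw [Statement13Aux.map_swap]
      -- rewrite `(map lam id) (R1 s)` via L1
      have st2 := LinearMap.congr_fun (Statement13Aux.L1 k H U lam) s
      simp only [LinearMap.comp_apply] at st2
      rw [st2]
      -- coassociativity
      have st3 : (TensorProduct.map (TensorProduct.map LinearMap.id lam) LinearMap.id) s =
          (TensorProduct.map (TensorProduct.assoc k H H U).toLinearMap LinearMap.id)
            ((TensorProduct.map (TensorProduct.map (Coalgebra.comul (R := k)) LinearMap.id)
              LinearMap.id) s) := by
        rw [hs, Statement13Aux.map_map_fst, ← hl1, Statement13Aux.map_map_fst,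
          Statement13Aux.map_map_fst, LinearMap.comp_assoc]
      rw [st3]
      set s2 := (TensorProduct.map (TensorProduct.map (Coalgebra.comul (R := k)) LinearMap.id)
        LinearMap.id) s with hs2
      have st4 := LinearMap.congr_fun (Statement13Aux.L2 k H U) s2
      simp only [LinearMap.comp_apply] at st4
      rw [st4]
      have st5 := LinearMap.congr_fun (Statement13Aux.L3 k H U) s
      simp only [LinearMap.comp_apply] at st5
      rw [hs2, st5, Statement13Aux.map_map_snd, Statement13Aux.map_map_snd]
      have hmerge : (LinearMap.mul' k H ∘ₗ TensorProduct.map LinearMap.id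
            (LinearMap.mul' k H ∘ₗ
              TensorProduct.map (HopfAlgebra.antipode (R := k)) LinearMap.id)) ∘ₗ
          TensorProduct.map LinearMap.id (Coalgebra.comul (R := k)) =
          LinearMap.mul' k H ∘ₗ TensorProduct.map LinearMap.id
            (Algebra.linearMap k H ∘ₗ Coalgebra.counit) := by
        rw [LinearMap.comp_assoc, ← TensorProduct.map_comp, LinearMap.id_comp,
          Statement13Aux.antipode_rTensor]
      rw [hmerge, ← Statement13Aux.map_map_snd (g := LinearMap.mul' k H)]
      have st6 := LinearMap.congr_fun (Statement13Aux.L4 k H U) s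
      simp only [LinearMap.comp_apply] at st6
      rw [st6, hs, Statement13Aux.map_map_fst]
      have hfin : ((TensorProduct.lid k U).toLinearMap ∘ₗ
          TensorProduct.map (Coalgebra.counit (R := k)) LinearMap.id) ∘ₗ lam =
          LinearMap.id := by
        rw [LinearMap.comp_assoc]; exact hl2'
      rw [hfin]
      simp [TensorProduct.map_id]
    calc (TensorProduct.comm k H U) (lam u)
        = M' k H U (R2 k H U ((TensorProduct.map lam (LinearMap.id : H →ₗ[k] H))
            (u ⊗ₜ (1 : H)))) := hrhs.symm
      _ = M' k H U (R2 k H U ((TensorProduct.map lam (LinearMap.id : H →ₗ[k] H))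
            (adjointCoaction k H U lam rho u))) := by rw [h]
      _ = rho u := hlhs
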